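/- Let m ≥ 2, t ≥ 2, and consider the distance-transitive graph Γ = Γ(m, K_{t+1}) (connectivity one, lobes complete graphs on t+1 vertices, each vertex in m lobes), with G = Aut(Γ) and a fixed vertex α. Then for every r ≥ 1, the sphere S_r(α,Γ) is a single G_α-orbit of size m·(m−1)^{r−1}·t^r; consequently, arranging the subdegrees in non-decreasing order m₁ ≤ m₂ ≤ ⋯, one has lim_{r→∞} m_r^{1/r} = (m−1)·t = ((m−1)/m)·m₁. -/

import Mathlib

open Filter


section SwapMachinery

variable {A B : Type*} [DecidableEq A] [DecidableEq B]

/-- a fibre-respecting involution of `A × B` swapping `a` and `b`. -/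
def swapLetter (a b c : A × B) : A × B :=
  (Equiv.swap a.1 b.1 c.1, if c.1 = a.1 ∨ c.1 = b.1 then Equiv.swap a.2 b.2 c.2 else c.2)

lemma swapLetter_fst (a b c : A × B) : (swapLetter a b c).1 = Equiv.swap a.1 b.1 c.1 := rfl

lemma swapLetter_left (a b : A × B) : swapLetter a b a = b := by
  simp [swapLetter]

lemma swapLetter_right (a b : A × B) : swapLetter a b b = a := by
  simp [swapLetter, Prod.ext_iff, Equiv.swap_apply_right]

lemma swapLetter_invol (a b c : A × B) : swapLetter a b (swapLetter a b c) = c := by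
  unfold swapLetter
  ext
  · simp
  · simp only
    by_cases h : c.1 = a.1 ∨ c.1 = b.1
    · have h2 : Equiv.swap a.1 b.1 c.1 = a.1 ∨ Equiv.swap a.1 b.1 c.1 = b.1 := by
        rcases h with h | h <;> simp [h, Equiv.swap_apply_left, Equiv.swap_apply_right] <;> tauto
      simp [h, h2]
    · have h2 : ¬ (Equiv.swap a.1 b.1 c.1 = a.1 ∨ Equiv.swap a.1 b.1 c.1 = b.1) := by
        push_neg
        constructor
        · intro hc; apply h; right
          have := congrArg (Equiv.swap a.1 b.1) hc
          simpa [Equiv.swap_apply_left] using this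
        · intro hc; apply h; left
          have := congrArg (Equiv.swap a.1 b.1) hc
          simpa [Equiv.swap_apply_right] using this
      simp [h, h2]

lemma swapLetter_inj (a b : A × B) : Function.Injective (swapLetter a b) :=
  Function.LeftInverse.injective (g := swapLetter a b) (swapLetter_invol a b)

lemma swapLetter_mem_iff (a b c : A × B) :
    (swapLetter a b c = a ∨ swapLetter a b c = b) ↔ (c = a ∨ c = b) := by
  constructor
  · rintro (h | h)
    · right; have := congrArg (swapLetter a b) h
      rwa [swapLetter_invol, swapLetter_left] at this
    · left; have := congrArg (swapLetter a b) h
      rwa [swapLetter_invol, swapLetter_right] at this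
  · rintro (rfl | rfl)
    · exact Or.inr (swapLetter_left _ _)
    · exact Or.inl (swapLetter_right _ _)

lemma swapLetter_fst_eq_iff (a b c c' : A × B) :
    (swapLetter a b c).1 = (swapLetter a b c').1 ↔ c.1 = c'.1 := by
  rw [swapLetter_fst, swapLetter_fst]
  exact ⟨fun h => (Equiv.swap a.1 b.1).injective h, fun h => by rw [h]⟩

/-- the path-swapping map on lists of letters: swaps the subtree at `xs` with the
subtree at `ys` in the rooted tree of all lists. -/
def swapList : List (A × B) → List (A × B) → List (A × B) → List (A × B)
  | a :: xs, b :: ys, c :: zs =>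
      swapLetter a b c :: (if c = a ∨ c = b then swapList xs ys zs else zs)
  | _, _, zs => zs

@[simp] lemma swapList_nil3 (xs ys : List (A × B)) : swapList xs ys [] = [] := by
  cases xs <;> cases ys <;> rfl

@[simp] lemma swapList_nil1 (ys zs : List (A × B)) : swapList [] ys zs = zs := by
  cases ys <;> cases zs <;> rfl

@[simp] lemma swapList_nil2 (xs zs : List (A × B)) : swapList xs [] zs = zs := by
  cases xs <;> cases zs <;> rfl

lemma swapList_cons (a b c : A × B) (xs ys zs : List (A × B)) :
    swapList (a :: xs) (b :: ys) (c :: zs) =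
      swapLetter a b c :: (if c = a ∨ c = b then swapList xs ys zs else zs) := rfl

lemma swapList_length : ∀ (xs ys zs : List (A × B)),
    (swapList xs ys zs).length = zs.length
  | a :: xs, b :: ys, c :: zs => by
      rw [swapList_cons]
      by_cases h : c = a ∨ c = b <;> simp [h, swapList_length xs ys zs]
  | [], ys, zs => by simp
  | xs, [], zs => by simp
  | xs, ys, [] => by simp

lemma swapList_invol : ∀ (xs ys zs : List (A × B)),
    swapList xs ys (swapList xs ys zs) = zs
  | a :: xs, b :: ys, c :: zs => by
      rw [swapList_cons]
      by_cases h : c = a ∨ c = b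
      · rw [if_pos h, swapList_cons, if_pos ((swapLetter_mem_iff a b c).2 h),
          swapLetter_invol, swapList_invol xs ys zs]
      · rw [if_neg h, swapList_cons,
          if_neg (fun hc => h ((swapLetter_mem_iff a b c).1 hc)), swapLetter_invol]
  | [], ys, zs => by simp
  | xs, [], zs => by simp
  | xs, ys, [] => by simp

lemma swapList_self : ∀ (xs ys : List (A × B)), xs.length = ys.length →
    swapList xs ys xs = ys
  | [], [], _ => rfl
  | a :: xs, b :: ys, h => by
      rw [swapList_cons, if_pos (Or.inl rfl), swapLetter_left,
        swapList_self xs ys (by simpa using h)]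

/-- tracking state: the pair of pivot letters at the current node, if the current
node lies on one of the two pivot paths. -/
def trackState : List (A × B) → List (A × B) → List (A × B) → Option ((A × B) × (A × B))
  | a :: _, b :: _, [] => some (a, b)
  | a :: xs, b :: ys, c :: zs => if c = a ∨ c = b then trackState xs ys zs else none
  | _, _, _ => none

/-- the transformation applied to the letter appended after `zs`. -/
def ltF (xs ys zs : List (A × B)) (c : A × B) : A × B :=
  match trackState xs ys zs with
  | some (a, b) => swapLetter a b c
  | none => c

lemma swapList_concat : ∀ (xs ys zs : List (A × B)) (c : A × B),
    swapList xs ys (zs ++ [c]) = swapList xs ys zs ++ [ltF xs ys zs c]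
  | a :: xs, b :: ys, [], c => by
      rw [List.nil_append, swapList_cons, swapList_nil3]
      simp [ltF, trackState]
  | a :: xs, b :: ys, c' :: zs, c => by
      rw [List.cons_append, swapList_cons, swapList_cons]
      by_cases h : c' = a ∨ c' = b
      · rw [if_pos h, if_pos h, swapList_concat xs ys zs c]
        simp [ltF, trackState, h]
      · rw [if_neg h, if_neg h]
        simp [ltF, trackState, h]
  | [], ys, zs, c => by
      have : trackState ([] : List (A × B)) ys zs = none := by cases ys <;> cases zs <;> rfl
      simp [ltF, this]
  | xs, [], zs, c => by
      simp only [swapList_nil2]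
      have : trackState xs ([] : List (A × B)) zs = none := by cases xs <;> cases zs <;> rfl
      simp [ltF, this]

lemma ltF_inj (xs ys zs : List (A × B)) : Function.Injective (ltF xs ys zs) := by
  unfold ltF
  cases h : trackState xs ys zs with
  | none => exact fun a b hab => hab
  | some p => exact fun a b hab => swapLetter_inj p.1 p.2 hab

lemma ltF_fst_eq_iff (xs ys zs : List (A × B)) (c c' : A × B) :
    (ltF xs ys zs c).1 = (ltF xs ys zs c').1 ↔ c.1 = c'.1 := by
  unfold ltF
  cases h : trackState xs ys zs with
  | none => exact Iff.rfl
  | some p => exact swapLetter_fst_eq_iff p.1 p.2 c c'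

end SwapMachinery

section WTdefs

/-- address type for the tree of lobes: `none` is the root; `some (c, s)` descends
first by letter `c` (lobe among `m`, vertex among `t`) then by letters in `s`
(lobe among the `m-1` non-parental lobes, vertex among `t`). -/
abbrev WT (m t : ℕ) := Option ((Fin m × Fin t) × List (Fin (m-1) × Fin t))

variable {m t : ℕ}

def depthW : WT m t → ℕ
  | none => 0
  | some (_, s) => s.length + 1

def parW : WT m t → Option (WT m t)
  | none => none
  | some (_, []) => some none
  | some (c, s) => some (some (c, s.dropLast))

def lobeW : WT m t → Option (Fin m ⊕ Fin (m-1))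
  | none => none
  | some (c, s) => some (match s.getLast? with | none => Sum.inl c.1 | some e => Sum.inr e.1)

@[simp] lemma depthW_none : depthW (none : WT m t) = 0 := rfl
@[simp] lemma depthW_some (c : Fin m × Fin t) (s : List (Fin (m-1) × Fin t)) :
    depthW (some (c, s) : WT m t) = s.length + 1 := rfl

@[simp] lemma parW_none : parW (none : WT m t) = none := rfl
@[simp] lemma parW_some_nil (c : Fin m × Fin t) :
    parW (some (c, []) : WT m t) = some none := rfl
lemma parW_some_concat (c : Fin m × Fin t) (s : List (Fin (m-1) × Fin t)) (e) :
    parW (some (c, s ++ [e]) : WT m t) = some (some (c, s)) := by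
  rcases s with _ | ⟨a, s⟩
  · simp [parW]
  · show some (some (c, ((a :: s) ++ [e]).dropLast)) = _
    rw [List.dropLast_concat]

@[simp] lemma lobeW_none : lobeW (none : WT m t) = none := rfl
@[simp] lemma lobeW_some_nil (c : Fin m × Fin t) :
    lobeW (some (c, []) : WT m t) = some (Sum.inl c.1) := rfl
lemma lobeW_some_concat (c : Fin m × Fin t) (s : List (Fin (m-1) × Fin t)) (e) :
    lobeW (some (c, s ++ [e]) : WT m t) = some (Sum.inr e.1) := by
  simp [lobeW]

/-- adjacency of addresses: parent/child, or siblings within the same lobe. -/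
def RW (z z' : WT m t) : Prop :=
  z ≠ z' ∧ (parW z = some z' ∨ parW z' = some z ∨
    (z ≠ none ∧ parW z = parW z' ∧ lobeW z = lobeW z'))

/-- the automorphism of the address tree swapping the subtrees at `x` and `y`. -/
def FW (x y z : WT m t) : WT m t :=
  match x, y, z with
  | some (cx, sx), some (cy, sy), some (c, s) =>
      some (swapLetter cx cy c, if c = cx ∨ c = cy then swapList sx sy s else s)
  | _, _, z => z

lemma eq_nil_or_concat' {α : Type*} (l : List α) : l = [] ∨ ∃ l' e, l = l' ++ [e] := by
  rcases List.eq_nil_or_concat l with h | ⟨l', e, h⟩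
  · exact Or.inl h
  · exact Or.inr ⟨l', e, by simpa [List.concat_eq_append] using h⟩

end WTdefs
section FWlemmas

variable {m t : ℕ} {cx cy : Fin m × Fin t} {sx sy : List (Fin (m-1) × Fin t)}

@[simp] lemma FW_none (x y : WT m t) : FW x y none = none := by
  rcases x with _ | ⟨cx, sx⟩ <;> rcases y with _ | ⟨cy, sy⟩ <;> rfl

lemma FW_some (c : Fin m × Fin t) (s : List (Fin (m-1) × Fin t)) :
    FW (some (cx, sx)) (some (cy, sy)) (some (c, s)) =
      some (swapLetter cx cy c, if c = cx ∨ c = cy then swapList sx sy s else s) := rfl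

lemma FW_self (hlen : sx.length = sy.length) :
    FW (some (cx, sx)) (some (cy, sy)) (some (cx, sx)) = some (cy, sy) := by
  rw [FW_some, if_pos (Or.inl rfl), swapLetter_left, swapList_self _ _ hlen]

@[simp] lemma FW_none_left (y z : WT m t) : FW none y z = z := by
  rcases y with _ | ⟨cy, sy⟩ <;> rcases z with _ | ⟨c, s⟩ <;> rfl

@[simp] lemma FW_none_right (x z : WT m t) : FW x none z = z := by
  rcases x with _ | ⟨cx, sx⟩ <;> rcases z with _ | ⟨c, s⟩ <;> rfl

lemma FW_invol (x y : WT m t) (z : WT m t) : FW x y (FW x y z) = z := by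
  rcases x with _ | ⟨cx, sx⟩
  · rfl
  rcases y with _ | ⟨cy, sy⟩
  · rfl
  rcases z with _ | ⟨c, s⟩
  · rfl
  rw [FW_some]
  by_cases h : c = cx ∨ c = cy
  · rw [if_pos h, FW_some, if_pos ((swapLetter_mem_iff cx cy c).2 h), swapLetter_invol,
      swapList_invol]
  · rw [if_neg h, FW_some, if_neg (fun hc => h ((swapLetter_mem_iff cx cy c).1 hc)),
      swapLetter_invol]

lemma FW_inj (x y : WT m t) : Function.Injective (FW x y) :=
  Function.LeftInverse.injective (g := FW x y) (FW_invol x y)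

lemma FW_parW (x y : WT m t) (z : WT m t) :
    parW (FW x y z) = (parW z).map (FW x y) := by
  rcases x with _ | ⟨cx, sx⟩
  · have h : FW (none : WT m t) y = id := funext fun w => FW_none_left y w
    rw [h, Option.map_id]; rfl
  rcases y with _ | ⟨cy, sy⟩
  · have h : FW (some (cx, sx) : WT m t) none = id := funext fun w => FW_none_right _ w
    rw [h, Option.map_id]; rfl
  rcases z with _ | ⟨c, s⟩
  · rfl
  rcases eq_nil_or_concat' s with rfl | ⟨s₀, e, rfl⟩
  · rw [FW_some]
    by_cases h : c = cx ∨ c = cy <;> simp [h]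
  · rw [FW_some]
    by_cases h : c = cx ∨ c = cy
    · rw [if_pos h, swapList_concat, parW_some_concat, parW_some_concat]
      simp [Option.map, FW_some, if_pos h]
    · rw [if_neg h, parW_some_concat, parW_some_concat]
      simp [Option.map, FW_some, if_neg h]

lemma FW_ne_none {x y : WT m t} {z : WT m t} (hz : z ≠ none) : FW x y z ≠ none := by
  intro h
  apply hz
  have := congrArg (FW x y) h
  rwa [FW_invol, FW_none] at this

lemma RW_FW_aux (x y : WT m t) (z z' : WT m t) (h : RW z z') : RW (FW x y z) (FW x y z') := by
  obtain ⟨hne, hcase⟩ := h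
  refine ⟨fun hc => hne (FW_inj x y hc), ?_⟩
  rcases x with _ | ⟨cx, sx⟩
  · exact hcase
  rcases y with _ | ⟨cy, sy⟩
  · exact hcase
  rcases hcase with hp | hp | ⟨hzn, hp, hl⟩
  · left; rw [FW_parW, hp, Option.map_some]
  · right; left; rw [FW_parW, hp, Option.map_some]
  · right; right
    refine ⟨FW_ne_none hzn, by rw [FW_parW, FW_parW, hp], ?_⟩
    -- lobe equality
    rcases z with _ | ⟨c, s⟩
    · exact absurd rfl hzn
    rcases z' with _ | ⟨c', s'⟩
    · simp [parW] at hp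
      rcases s with _ | ⟨a, s⟩ <;> simp [parW] at hp
    rcases eq_nil_or_concat' s with rfl | ⟨s₀, e, rfl⟩
    · rcases eq_nil_or_concat' s' with rfl | ⟨s₀', e', rfl⟩
      · -- both depth 1, same first lobe
        simp only [lobeW_some_nil, Option.some_inj, Sum.inl.injEq] at hl
        rw [FW_some, FW_some]
        have e1 : (if c = cx ∨ c = cy then swapList sx sy [] else []) = [] := by
          split <;> simp
        have e2 : (if c' = cx ∨ c' = cy then swapList sx sy [] else []) = [] := by
          split <;> simp
        rw [e1, e2, lobeW_some_nil, lobeW_some_nil]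
        simp [swapLetter_fst, hl]
      · rw [parW_some_nil, parW_some_concat] at hp
        simp at hp
    · rcases eq_nil_or_concat' s' with rfl | ⟨s₀', e', rfl⟩
      · rw [parW_some_concat, parW_some_nil] at hp
        simp at hp
      · rw [parW_some_concat, parW_some_concat] at hp
        simp only [Option.some_inj] at hp
        obtain ⟨rfl, rfl⟩ := Prod.mk.inj hp
        rw [lobeW_some_concat, lobeW_some_concat] at hl
        simp only [Option.some_inj, Sum.inr.injEq] at hl
        rw [FW_some, FW_some]
        by_cases h1 : c = cx ∨ c = cy
        · rw [if_pos h1, if_pos h1, swapList_concat, swapList_concat,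
            lobeW_some_concat, lobeW_some_concat]
          rw [Option.some_inj, Sum.inr.injEq]
          exact (ltF_fst_eq_iff _ _ _ _ _).2 hl
        · rw [if_neg h1, if_neg h1, lobeW_some_concat, lobeW_some_concat]
          simp [hl]

lemma RW_FW (x y : WT m t) (z z' : WT m t) : RW (FW x y z) (FW x y z') ↔ RW z z' := by
  constructor
  · intro h
    have := RW_FW_aux x y _ _ h
    rwa [FW_invol, FW_invol] at this
  · exact RW_FW_aux x y z z'

end FWlemmas
section Counting

lemma WT_sphere_ncard (m t k : ℕ) :
    {z : WT m t | depthW z = k + 1}.ncard = m * (m - 1) ^ k * t ^ (k + 1) := by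
  have e : {z : WT m t | depthW z = k + 1} ≃
      (Fin m × Fin t) × List.Vector (Fin (m - 1) × Fin t) k :=
    { toFun := fun z => match z with
        | ⟨some (c, s), h⟩ => (c, ⟨s, by simpa [depthW] using h⟩)
        | ⟨none, h⟩ => absurd h (by simp [depthW])
      invFun := fun p => ⟨some (p.1, p.2.1), by simp [depthW, p.2.2]⟩
      left_inv := fun z => match z with
        | ⟨some (c, s), h⟩ => rfl
        | ⟨none, h⟩ => absurd h (by simp [depthW])
      right_inv := fun p => rfl }
  rw [← Nat.card_coe_set_eq, Nat.card_congr e, Nat.card_eq_fintype_card]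
  simp only [Fintype.card_prod, card_vector, Fintype.card_fin]
  ring

end Counting

section Limit

lemma tendsto_aux (m t : ℕ) (hm : 2 ≤ m) (ht : 2 ≤ t) (f : ℕ → ℕ)
    (hf : ∀ r : ℕ, 1 ≤ r → f r = m * (m - 1) ^ (r - 1) * t ^ r) :
    Filter.Tendsto (fun r : ℕ => ((f r : ℝ)) ^ ((r : ℝ)⁻¹)) Filter.atTop
      (nhds (((m : ℝ) - 1) * t)) := by
  have hm1 : (1 : ℝ) ≤ (m : ℝ) - 1 := by
    have : (2 : ℝ) ≤ (m : ℝ) := by exact_mod_cast hm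
    linarith
  have hmpos : (0 : ℝ) < (m : ℝ) - 1 := by linarith
  have htpos : (0 : ℝ) < (t : ℝ) := by positivity
  set b : ℝ := ((m : ℝ) - 1) * t with hb
  have hbpos : 0 < b := by positivity
  set C : ℝ := (m : ℝ) / ((m : ℝ) - 1) with hC
  have hCpos : 0 < C := by
    apply div_pos _ hmpos
    positivity
  -- the limit of the auxiliary factor
  have h1 : Filter.Tendsto (fun r : ℕ => C ^ ((r : ℝ)⁻¹)) Filter.atTop (nhds 1) := by
    have hcont : ContinuousAt (fun x : ℝ => C ^ x) 0 :=
      Real.continuousAt_const_rpow (ne_of_gt hCpos)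
    have := hcont.tendsto.comp tendsto_inv_atTop_nhds_zero_nat
    simpa [Real.rpow_zero, Function.comp_def] using this
  have h2 : Filter.Tendsto (fun r : ℕ => C ^ ((r : ℝ)⁻¹) * b) Filter.atTop (nhds b) := by
    simpa using h1.mul_const b
  refine h2.congr' ?_
  filter_upwards [Filter.eventually_ge_atTop 1] with r hr
  have hrne : (r : ℝ) ≠ 0 := by
    have : 0 < r := hr
    positivity
  have hcast : ((f r : ℝ)) = C * b ^ r := by
    rw [hf r hr]
    push_cast [Nat.cast_sub (by omega : 1 ≤ m)]
    rw [hb, hC, mul_pow]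
    obtain ⟨k, rfl⟩ : ∃ k, r = k + 1 := ⟨r - 1, by omega⟩
    simp only [Nat.add_sub_cancel]
    rw [pow_succ ((m : ℝ) - 1) k]
    field_simp
  rw [hcast, Real.mul_rpow (le_of_lt hCpos) (by positivity),
    ← Real.rpow_natCast b r, ← Real.rpow_mul (le_of_lt hbpos),
    mul_inv_cancel₀ hrne, Real.rpow_one]

end Limit
section MainStructure

open SimpleGraph

lemma mainStructure {V : Type*} (Γ : SimpleGraph V) (hconn : Γ.Connected)
    (m t : ℕ) (hm : 2 ≤ m) (ht : 2 ≤ t)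
    (L : Set (Set V))
    (hlobesize : ∀ l ∈ L, l.ncard = t + 1)
    (hlobeclique : ∀ l ∈ L, ∀ x ∈ l, ∀ y ∈ l, x ≠ y → Γ.Adj x y)
    (hedge : ∀ x y : V, Γ.Adj x y → ∃! l, l ∈ L ∧ x ∈ l ∧ y ∈ l)
    (hvertex : ∀ v : V, {l ∈ L | v ∈ l}.ncard = m)
    (hcycle : ∀ (v : V) (c : Γ.Walk v v), c.IsCycle →
      ∃ l ∈ L, ∀ x ∈ c.support, x ∈ l)
    (α : V) :
    ∃ Φ : WT m t → V, Function.Injective Φ ∧ Function.Surjective Φ ∧ Φ none = α ∧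
      (∀ z, Γ.dist α (Φ z) = depthW z) ∧
      (∀ z z', Γ.Adj (Φ z) (Φ z') ↔ RW z z') := by
  classical
  set d : V → ℕ := fun v => Γ.dist α v with hd
  -- basics about lobes
  have hlfin : ∀ l ∈ L, l.Finite := by
    intro l hl
    by_contra h
    have := Set.Infinite.ncard h
    rw [hlobesize l hl] at this
    omega
  have hlne : ∀ l ∈ L, l.Nonempty := by
    intro l hl
    apply Set.nonempty_of_ncard_ne_zero
    rw [hlobesize l hl]; omega
  have hdisj : ∀ l ∈ L, ∀ l' ∈ L, ∀ x y : V, x ∈ l → x ∈ l' → y ∈ l → y ∈ l' →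
      x ≠ y → l = l' := by
    intro l hl l' hl' x y hxl hxl' hyl hyl' hxy
    obtain ⟨l₀, _, hu⟩ := hedge x y (hlobeclique l hl x hxl y hyl hxy)
    rw [hu l ⟨hl, hxl, hyl⟩, hu l' ⟨hl', hxl', hyl'⟩]
  -- basics about distance
  have hd0 : d α = 0 := by simp [hd]
  have hdzero : ∀ v, d v = 0 → v = α := by
    intro v hv
    have := (hconn.dist_eq_zero_iff (u := α) (v := v)).1 hv
    exact this.symm
  have hdpos : ∀ v, v ≠ α → 1 ≤ d v := by
    intro v hv
    exact hconn.pos_dist_of_ne (u := α) (v := v) (Ne.symm hv)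
  have hdadj : ∀ u v, Γ.Adj u v → d v ≤ d u + 1 := by
    intro u v huv
    calc d v ≤ d u + Γ.dist u v := by
          simpa [hd] using hconn.dist_triangle (u := α) (v := u) (w := v)
      _ ≤ d u + 1 := by
          have : Γ.dist u v = 1 := (dist_eq_one_iff_adj (G := Γ)).2 huv
          omega
  -- if v is on a walk from α, then d v is at most the length
  have hDLE : ∀ (w : V) (q : Γ.Walk α w) (v : V), v ∈ q.support → d v ≤ q.length := by
    intro w q v hv
    calc d v ≤ (q.takeUntil v hv).length := dist_le _
      _ ≤ q.length := Walk.length_takeUntil_le _ _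
  -- existence of a parent vertex
  have hpar : ∀ v, v ≠ α → ∃ u, Γ.Adj u v ∧ d u + 1 = d v := by
    intro v hv
    obtain ⟨p, hp⟩ := hconn.exists_walk_length_eq_dist α v
    have hlen : p.length = d v := hp
    have hnn : ¬ p.reverse.Nil := by
      rw [Walk.not_nil_iff_lt_length, Walk.length_reverse, hlen]
      exact hdpos v hv
    obtain ⟨u, hadj, q, hq⟩ := Walk.not_nil_iff.1 hnn
    have hqlen : q.length + 1 = d v := by
      have := congrArg Walk.length hq
      rw [Walk.length_reverse, hlen] at this
      simp [Walk.length_cons] at this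
      omega
    have hdu : d u ≤ q.length := by
      have : d u ≤ q.reverse.length := dist_le _
      simpa [Walk.length_reverse] using this
    have h1 : d v ≤ d u + 1 := hdadj u v hadj.symm
    exact ⟨u, hadj.symm, by omega⟩
  -- concatenating an edge to a path avoiding the new endpoint is a path
  have hconcatPath : ∀ (x y v : V) (p : Γ.Walk x y) (h : Γ.Adj y v), p.IsPath →
      v ∉ p.support → (p.concat h).IsPath := by
    intro x y v p h hp hv
    rw [← Walk.isPath_reverse_iff, Walk.reverse_concat]
    rw [Walk.cons_isPath_iff, Walk.isPath_reverse_iff]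
    exact ⟨hp, by simpa [Walk.support_reverse] using hv⟩
  -- the cut-vertex lemma
  have hCUT : ∀ v, ∀ l1 ∈ L, v ∈ l1 → ∀ l2 ∈ L, v ∈ l2 → l1 ≠ l2 →
      ∀ x ∈ l1, x ≠ v → ∀ y ∈ l2, y ≠ v → ∀ p : Γ.Walk x y, v ∈ p.support := by
    intro v l1 hl1 hvl1 l2 hl2 hvl2 hne x hxl1 hxv y hyl2 hyv p
    by_contra hv
    have hxy : x ≠ y := by
      rintro rfl
      exact hne (hdisj l1 hl1 l2 hl2 x v hxl1 hyl2 hvl1 hvl2 hxv)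
    set p' := p.toPath with hp'
    have hvp' : v ∉ (p' : Γ.Walk x y).support := fun h => hv (Walk.support_toPath_subset p h)
    have hadj_vx : Γ.Adj v x := hlobeclique l1 hl1 v hvl1 x hxl1 (Ne.symm hxv)
    have hadj_yv : Γ.Adj y v := hlobeclique l2 hl2 y hyl2 v hvl2 hyv
    have hPath : ((p' : Γ.Walk x y).concat hadj_yv).IsPath :=
      hconcatPath x y v _ hadj_yv p'.2 hvp'
    have hEdge : s(v, x) ∉ ((p' : Γ.Walk x y).concat hadj_yv).edges := by
      rw [Walk.edges_concat, List.concat_eq_append]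
      intro hmem
      rcases List.mem_append.1 hmem with hmem | hmem
      · exact hvp' (Walk.fst_mem_support_of_mem_edges _ hmem)
      · simp only [List.mem_singleton] at hmem
        rcases Sym2.eq_iff.1 hmem with ⟨h1, h2⟩ | ⟨h1, h2⟩
        · exact hxv h2
        · exact hxy h2
    have hcyc : (Walk.cons hadj_vx ((p' : Γ.Walk x y).concat hadj_yv)).IsCycle :=
      Path.cons_isCycle ⟨_, hPath⟩ hadj_vx hEdge
    obtain ⟨l, hl, hsub⟩ := hcycle v _ hcyc
    have hvl : v ∈ l := hsub v (Walk.start_mem_support _)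
    have hxl : x ∈ l := hsub x (by
      rw [Walk.support_cons]
      exact List.mem_cons_of_mem _ (Walk.start_mem_support _))
    have hyl : y ∈ l := hsub y (by
      rw [Walk.support_cons]
      refine List.mem_cons_of_mem _ ?_
      rw [Walk.support_concat]
      exact List.mem_append_left _ (Walk.end_mem_support _))
    have e1 : l = l1 := hdisj l hl l1 hl1 v x hvl hvl1 hxl hxl1 (Ne.symm hxv)
    have e2 : l = l2 := hdisj l hl l2 hl2 v y hvl hvl2 hyl hyl2 (Ne.symm hyv)
    exact hne (e1 ▸ e2)
  -- the gate lemma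
  have hGATE : ∀ l, ∃ g, l ∈ L → (g ∈ l ∧ (∀ w ∈ l, w ≠ g → d w = d g + 1) ∧
      (∀ w ∈ l, w ≠ g → ∀ p : Γ.Walk α w, g ∈ p.support)) := by
    intro l
    by_cases hl : l ∈ L
    swap
    · exact ⟨α, fun h => absurd h hl⟩
    obtain ⟨g, hgl, hgmin⟩ := Set.exists_min_image l d (hlfin l hl) (hlne l hl)
    have hpass : ∀ w ∈ l, w ≠ g → ∀ p : Γ.Walk α w, g ∈ p.support := by
      intro w hwl hwg p
      by_contra hgp
      by_cases hgα : g = α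
      · exact hgp (hgα ▸ p.start_mem_support)
      obtain ⟨u, huadj, hud⟩ := hpar g hgα
      have hdu : d u < d g := by omega
      have hul : u ∉ l := fun hul => by have := hgmin u hul; omega
      obtain ⟨q, hq⟩ := hconn.exists_walk_length_eq_dist α u
      have hqlen : q.length = d u := hq
      have hgq : g ∉ q.support := fun hgq => by
        have := hDLE u q g hgq; omega
      set r0 : Γ.Walk w u := p.reverse.append q with hr0
      have hgr0 : g ∉ r0.support := by
        rw [hr0, Walk.support_append]
        intro hmem
        rcases List.mem_append.1 hmem with hmem | hmem
        · rw [Walk.support_reverse] at hmem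
          exact hgp (List.mem_reverse.1 hmem)
        · exact hgq (List.mem_of_mem_tail hmem)
      set r := r0.toPath with hr
      have hgr : g ∉ (r : Γ.Walk w u).support := fun h => hgr0 (Walk.support_toPath_subset r0 h)
      have hwu : w ≠ u := fun h => hul (h ▸ hwl)
      have hadj_gw : Γ.Adj g w := hlobeclique l hl g hgl w hwl (Ne.symm hwg)
      have hgu : g ≠ u := fun h => by rw [← h] at hdu; omega
      have hPath : ((r : Γ.Walk w u).concat huadj).IsPath := hconcatPath w u g _ huadj r.2 hgr
      have hEdge : s(g, w) ∉ ((r : Γ.Walk w u).concat huadj).edges := by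
        rw [Walk.edges_concat, List.concat_eq_append]
        intro hmem
        rcases List.mem_append.1 hmem with hmem | hmem
        · exact hgr (Walk.fst_mem_support_of_mem_edges _ hmem)
        · simp only [List.mem_singleton] at hmem
          rcases Sym2.eq_iff.1 hmem with ⟨h1, h2⟩ | ⟨h1, h2⟩
          · exact hgu h1
          · exact hwu h2
      have hcyc : (Walk.cons hadj_gw ((r : Γ.Walk w u).concat huadj)).IsCycle :=
        Path.cons_isCycle ⟨_, hPath⟩ hadj_gw hEdge
      obtain ⟨l'', hl'', hsub⟩ := hcycle g _ hcyc
      have hgl'' : g ∈ l'' := hsub g (Walk.start_mem_support _)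
      have hwl'' : w ∈ l'' := hsub w (by
        rw [Walk.support_cons]
        exact List.mem_cons_of_mem _ (Walk.start_mem_support _))
      have hul'' : u ∈ l'' := hsub u (by
        rw [Walk.support_cons]
        refine List.mem_cons_of_mem _ ?_
        rw [Walk.support_concat]
        exact List.mem_append_left _ (Walk.end_mem_support _))
      have e1 : l'' = l := hdisj l'' hl'' l hl g w hgl'' hgl hwl'' hwl (Ne.symm hwg)
      exact hul (e1 ▸ hul'')
    have hdist : ∀ w ∈ l, w ≠ g → d w = d g + 1 := by
      intro w hwl hwg
      have hub : d w ≤ d g + 1 := hdadj g w (hlobeclique l hl g hgl w hwl (Ne.symm hwg))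
      obtain ⟨p, hp⟩ := hconn.exists_walk_length_eq_dist α w
      have hgs : g ∈ p.support := hpass w hwl hwg p
      have hsplit := congrArg Walk.length (p.take_spec hgs)
      rw [Walk.length_append] at hsplit
      have h1 : d g ≤ (p.takeUntil g hgs).length := dist_le _
      have h2 : (p.dropUntil g hgs).length ≠ 0 := by
        intro h0
        exact hwg (Walk.eq_of_length_eq_zero h0).symm
      have hplen : p.length = d w := hp
      omega
    exact ⟨g, fun _ => ⟨hgl, hdist, hpass⟩⟩
  choose gate hgate using hGATE
  have hgate_mem : ∀ l ∈ L, gate l ∈ l := fun l hl => (hgate l hl).1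
  have hgate_d : ∀ l ∈ L, ∀ w ∈ l, w ≠ gate l → d w = d (gate l) + 1 :=
    fun l hl => (hgate l hl).2.1
  have hgate_α : ∀ l ∈ L, α ∈ l → gate l = α := by
    intro l hl hαl
    by_contra hne
    have := hgate_d l hl α hαl (fun h => hne h.symm)
    rw [hd0] at this; omega
  -- parent lobe existence
  have hPL : ∀ v, ∃ l, v ≠ α → (l ∈ L ∧ v ∈ l ∧ gate l ≠ v ∧ d (gate l) + 1 = d v) := by
    intro v
    by_cases hv : v = α
    · exact ⟨∅, fun h => absurd hv h⟩
    obtain ⟨u, huv, hud⟩ := hpar v hv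
    obtain ⟨l, ⟨hl, hul, hvl⟩, -⟩ := hedge u v huv
    have hgle : d (gate l) ≤ d u := by
      by_cases h : u = gate l
      · rw [h]
      · have := hgate_d l hl u hul h; omega
    have hgv : gate l ≠ v := by
      intro h
      rw [h] at hgle; omega
    have hgd := hgate_d l hl v hvl (fun h => hgv h.symm)
    exact ⟨l, fun _ => ⟨hl, hvl, hgv, by omega⟩⟩
  choose pl hpl using hPL
  set pv : V → V := fun v => gate (pl v) with hpv
  -- uniqueness of the down-lobe
  have hPU : ∀ v, v ≠ α → ∀ l ∈ L, v ∈ l → l ≠ pl v → gate l = v := by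
    intro v hv l hl hvl hlne
    by_contra hgv
    obtain ⟨hplL, hvpl, hpvne, hpvd⟩ := hpl v hv
    have hdg : d (gate l) + 1 = d v := by
      have := hgate_d l hl v hvl (fun h => hgv h.symm); omega
    by_cases heq : gate l = pv v
    · refine hlne (hdisj l hl (pl v) hplL (gate l) v (hgate_mem l hl) ?_ hvl hvpl hgv)
      rw [heq]
      exact hgate_mem (pl v) hplL
    · obtain ⟨q1, hq1⟩ := hconn.exists_walk_length_eq_dist α (gate l)
      obtain ⟨q2, hq2⟩ := hconn.exists_walk_length_eq_dist α (pv v)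
      have hq1' : q1.length = d (gate l) := hq1
      have hq2' : q2.length = d (pv v) := hq2
      have hvmem := hCUT v l hl hvl (pl v) hplL hvpl hlne (gate l) (hgate_mem l hl) hgv
        (pv v) (hgate_mem (pl v) hplL) hpvne (q1.reverse.append q2)
      rw [Walk.support_append] at hvmem
      rcases List.mem_append.1 hvmem with hmem | hmem
      · rw [Walk.support_reverse] at hmem
        have := hDLE (gate l) q1 v (List.mem_reverse.1 hmem)
        simp only [hd, hpv] at *
        omega
      · have := hDLE (pv v) q2 v (List.mem_of_mem_tail hmem)
        simp only [hd, hpv] at *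
        omega
  have hP3 : ∀ v, v ≠ α → ∀ l ∈ L, v ∈ l → l ≠ pl v → ∀ w ∈ l, w ≠ v → d w = d v + 1 := by
    intro v hv l hl hvl hlne w hwl hwv
    have hg := hPU v hv l hl hvl hlne
    have := hgate_d l hl w hwl (by rw [hg]; exact hwv)
    rw [hg] at this; exact this
  have hPα : ∀ l ∈ L, α ∈ l → ∀ w ∈ l, w ≠ α → d w = 1 := by
    intro l hl hαl w hwl hwα
    have hg := hgate_α l hl hαl
    have := hgate_d l hl w hwl (by rw [hg]; exact hwα)
    rw [hg, hd0] at this; omega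
  have hU1 : ∀ w, w ≠ α → ∀ l ∈ L, w ∈ l → ∀ u ∈ l, d u < d w → l = pl w := by
    intro w hw l hl hwl u hul hdu
    by_contra hlne
    have hg := hPU w hw l hl hwl hlne
    by_cases h : u = w
    · rw [h] at hdu; omega
    · have := hgate_d l hl u hul (by rw [hg]; exact h)
      rw [hg] at this; omega
  have hU2 : ∀ w, w ≠ α → ∀ u ∈ pl w, d u < d w → u = pv w := by
    intro w hw u hu hdu
    obtain ⟨hplL, hwpl, hpvne, hpvd⟩ := hpl w hw
    by_cases h : u = pv w
    · exact h
    · have := hgate_d (pl w) hplL u hu h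
      omega
  -- enumeration of the non-parental vertices of a lobe
  have hENUMV : ∀ (l : Set V) (v : V), ∃ g : Fin t → V, l ∈ L → v ∈ l →
      ((∀ a, g a ∈ l ∧ g a ≠ v) ∧ Function.Injective g ∧
        (∀ w ∈ l, w ≠ v → ∃ a, g a = w)) := by
    intro l v
    by_cases h : l ∈ L ∧ v ∈ l
    swap
    · exact ⟨fun _ => α, fun h1 h2 => absurd ⟨h1, h2⟩ h⟩
    obtain ⟨hl, hvl⟩ := h
    have hfin : (l \ {v}).Finite := (hlfin l hl).subset Set.diff_subset
    have hcard : Nat.card (l \ {v} : Set V) = t := by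
      rw [Nat.card_coe_set_eq,
        Set.ncard_diff_singleton_of_mem hvl, hlobesize l hl]
      omega
    have : Finite (l \ {v} : Set V) := hfin.to_subtype
    have e := Finite.equivFinOfCardEq hcard
    refine ⟨fun a => (e.symm a : V), fun _ _ => ⟨?_, ?_, ?_⟩⟩
    · intro a
      have h2 := (e.symm a).2
      exact ⟨h2.1, by simpa using h2.2⟩
    · intro a b hab
      simpa using congrArg e (Subtype.ext hab)
    · intro w hwl hwv
      exact ⟨e ⟨w, ⟨hwl, by simpa using hwv⟩⟩, by simp⟩
  -- enumeration of the lobes at α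
  have hENUMR : ∃ f : Fin m → Set V, (∀ i, f i ∈ L ∧ α ∈ f i) ∧ Function.Injective f ∧
      (∀ l ∈ L, α ∈ l → ∃ i, f i = l) := by
    have hfin : {l ∈ L | α ∈ l}.Finite := by
      by_contra h
      have := Set.Infinite.ncard h
      rw [hvertex α] at this; omega
    have hcard : Nat.card {l ∈ L | α ∈ l} = m := by
      rw [Nat.card_coe_set_eq, hvertex α]
    have : Finite {l ∈ L | α ∈ l} := hfin.to_subtype
    have e := Finite.equivFinOfCardEq hcard
    refine ⟨fun i => (e.symm i : Set V), fun i => (e.symm i).2, ?_, ?_⟩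
    · intro a b hab
      simpa using congrArg e (Subtype.ext hab)
    · intro l hl hαl
      exact ⟨e ⟨l, hl, hαl⟩, by simp⟩
  obtain ⟨fR, hfR_mem, hfR_inj, hfR_surj⟩ := hENUMR
  -- enumeration of the non-parental lobes at a vertex
  have hENUML : ∀ (v : V) (l0 : Set V), ∃ f : Fin (m-1) → Set V, l0 ∈ L → v ∈ l0 →
      ((∀ i, f i ∈ L ∧ v ∈ f i ∧ f i ≠ l0) ∧ Function.Injective f ∧
        (∀ l ∈ L, v ∈ l → l ≠ l0 → ∃ i, f i = l)) := by
    intro v l0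
    by_cases h : l0 ∈ L ∧ v ∈ l0
    swap
    · exact ⟨fun _ => ∅, fun h1 h2 => absurd ⟨h1, h2⟩ h⟩
    obtain ⟨hl0, hvl0⟩ := h
    have hfinS : {l ∈ L | v ∈ l}.Finite := by
      by_contra hh
      have := Set.Infinite.ncard hh
      rw [hvertex v] at this; omega
    have hfin : ({l ∈ L | v ∈ l} \ {l0}).Finite := hfinS.subset Set.diff_subset
    have hcard : Nat.card ({l ∈ L | v ∈ l} \ {l0} : Set (Set V)) = m - 1 := by
      rw [Nat.card_coe_set_eq,
        Set.ncard_diff_singleton_of_mem (s := {l ∈ L | v ∈ l}) ⟨hl0, hvl0⟩, hvertex v]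
    have : Finite ({l ∈ L | v ∈ l} \ {l0} : Set (Set V)) := hfin.to_subtype
    have e := Finite.equivFinOfCardEq hcard
    refine ⟨fun i => (e.symm i : Set V), fun _ _ => ⟨?_, ?_, ?_⟩⟩
    · intro i
      obtain ⟨⟨h1, h2⟩, h3⟩ := (e.symm i).2
      exact ⟨h1, h2, by simpa using h3⟩
    · intro a b hab
      simpa using congrArg e (Subtype.ext hab)
    · intro l hl hvl hlne
      exact ⟨e ⟨l, ⟨hl, hvl⟩, by simpa using hlne⟩, by simp⟩
  choose fV hfV using hENUMV
  choose fL hfL using hENUML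
  -- the address map
  set step : V × Set V → (Fin (m-1) × Fin t) → V × Set V :=
    fun p c => (fV (fL p.1 p.2 c.1) p.1 c.2, fL p.1 p.2 c.1) with hstep
  set Ψ : (Fin m × Fin t) → List (Fin (m-1) × Fin t) → V × Set V :=
    fun c s => List.foldl step (fV (fR c.1) α c.2, fR c.1) s with hΨ
  have hΨnil : ∀ c, Ψ c [] = (fV (fR c.1) α c.2, fR c.1) := fun c => rfl
  have hΨconcat : ∀ c s e, Ψ c (s ++ [e]) = step (Ψ c s) e := by
    intro c s e
    simp [hΨ, List.foldl_append]
  -- the master invariant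
  have hM1 : ∀ c s, (Ψ c s).1 ≠ α ∧ d (Ψ c s).1 = s.length + 1 ∧
      (Ψ c s).2 = pl (Ψ c s).1 ∧ (Ψ c s).2 ∈ L ∧ (Ψ c s).1 ∈ (Ψ c s).2 := by
    intro c s
    induction s using List.reverseRecOn with
    | nil =>
      rw [hΨnil]
      obtain ⟨hlL, hαl⟩ := hfR_mem c.1
      obtain ⟨hmem, hinj, hsurj⟩ := hfV (fR c.1) α hlL hαl
      obtain ⟨hvl, hvα⟩ := hmem c.2
      have hd1 : d (fV (fR c.1) α c.2) = 1 := hPα (fR c.1) hlL hαl _ hvl hvα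
      have hpl1 : fR c.1 = pl (fV (fR c.1) α c.2) :=
        hU1 _ hvα (fR c.1) hlL hvl α hαl (by rw [hd0, hd1]; omega)
      exact ⟨hvα, by simp [hd1], hpl1, hlL, hvl⟩
    | append_singleton s e ih =>
      rw [hΨconcat]
      obtain ⟨hvne, hdv, hl0pl, hl0L, hvl0⟩ := ih
      obtain ⟨hfLmem, hfLinj, hfLsurj⟩ := hfL (Ψ c s).1 (Ψ c s).2 hl0L hvl0
      obtain ⟨hl'L, hvl', hl'ne⟩ := hfLmem e.1
      obtain ⟨hVmem, hVinj, hVsurj⟩ := hfV (fL (Ψ c s).1 (Ψ c s).2 e.1) (Ψ c s).1 hl'L hvl'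
      obtain ⟨hwl', hwv⟩ := hVmem e.2
      have hl'pl : fL (Ψ c s).1 (Ψ c s).2 e.1 ≠ pl (Ψ c s).1 := by
        rw [← hl0pl]; exact hl'ne
      have hdw : d (fV (fL (Ψ c s).1 (Ψ c s).2 e.1) (Ψ c s).1 e.2) = d (Ψ c s).1 + 1 :=
        hP3 (Ψ c s).1 hvne _ hl'L hvl' hl'pl _ hwl' hwv
      have hwα : fV (fL (Ψ c s).1 (Ψ c s).2 e.1) (Ψ c s).1 e.2 ≠ α := by
        intro h
        rw [h, hd0] at hdw; omega
      have hplw : fL (Ψ c s).1 (Ψ c s).2 e.1 =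
          pl (fV (fL (Ψ c s).1 (Ψ c s).2 e.1) (Ψ c s).1 e.2) :=
        hU1 _ hwα _ hl'L hwl' (Ψ c s).1 hvl' (by omega)
      refine ⟨hwα, ?_, hplw, hl'L, hwl'⟩
      show d (fV (fL (Ψ c s).1 (Ψ c s).2 e.1) (Ψ c s).1 e.2) = (s ++ [e]).length + 1
      rw [hdw, hdv]
      simp
  have hM2a : ∀ c, pl (Ψ c []).1 = fR c.1 ∧ pv (Ψ c []).1 = α := by
    intro c
    obtain ⟨hvα, hd1, hplv, hl0L, hvl0⟩ := hM1 c []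
    have hd1' : d (Ψ c []).1 = 1 := by simpa using hd1
    have h1 : pl (Ψ c []).1 = fR c.1 := by rw [← hplv, hΨnil]
    refine ⟨h1, ?_⟩
    have hαpl : α ∈ pl (Ψ c []).1 := by rw [h1]; exact (hfR_mem c.1).2
    exact (hU2 (Ψ c []).1 hvα α hαpl (by rw [hd0, hd1']; omega)).symm
  have hM2b : ∀ c s e, pl (Ψ c (s ++ [e])).1 = fL (Ψ c s).1 (Ψ c s).2 e.1 ∧
      pv (Ψ c (s ++ [e])).1 = (Ψ c s).1 := by
    intro c s e
    obtain ⟨hwα, hdw, hplw, hl'L, hwl'⟩ := hM1 c (s ++ [e])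
    obtain ⟨hvα, hdv, hplv, hl0L, hvl0⟩ := hM1 c s
    have h1 : pl (Ψ c (s ++ [e])).1 = fL (Ψ c s).1 (Ψ c s).2 e.1 := by
      rw [← hplw, hΨconcat]
    have hvmem : (Ψ c s).1 ∈ pl (Ψ c (s ++ [e])).1 := by
      rw [h1]
      exact (((hfL (Ψ c s).1 (Ψ c s).2 hl0L hvl0).1 e.1)).2.1
    have hlt : d (Ψ c s).1 < d (Ψ c (s ++ [e])).1 := by
      rw [hdv, hdw]
      simp only [List.length_append, List.length_singleton]
      omega
    exact ⟨h1, (hU2 _ hwα _ hvmem hlt).symm⟩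
  -- injectivity
  have hMinj : ∀ n c s c' s', s.length = n → (Ψ c s).1 = (Ψ c' s').1 →
      c = c' ∧ s = s' := by
    intro n
    induction n using Nat.strong_induction_on with
    | _ n ih =>
      intro c s c' s' hlen heq
      obtain ⟨hvα, hdv, hplv, hl0L, hvl0⟩ := hM1 c s
      obtain ⟨hvα', hdv', hplv', hl0L', hvl0'⟩ := hM1 c' s'
      have hlen' : s'.length = s.length := by rw [heq, hdv'] at hdv; omega
      rcases eq_nil_or_concat' s with rfl | ⟨s₀, e, rfl⟩
      · rcases eq_nil_or_concat' s' with rfl | ⟨s₀', e', rfl⟩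
        · obtain ⟨hpl1, -⟩ := hM2a c
          obtain ⟨hpl1', -⟩ := hM2a c'
          have hc1 : c.1 = c'.1 := by
            apply hfR_inj
            rw [← hpl1, ← hpl1', heq]
          have heq' : fV (fR c.1) α c.2 = fV (fR c'.1) α c'.2 := heq
          rw [← hc1] at heq'
          obtain ⟨hlL, hαl⟩ := hfR_mem c.1
          have hc2 : c.2 = c'.2 := (hfV (fR c.1) α hlL hαl).2.1 heq'
          exact ⟨Prod.ext hc1 hc2, rfl⟩
        · exfalso
          simp only [List.length_append, List.length_singleton, List.length_nil] at hlen'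
          omega
      · rcases eq_nil_or_concat' s' with rfl | ⟨s₀', e', rfl⟩
        · exfalso
          simp only [List.length_append, List.length_singleton, List.length_nil] at hlen'
          omega
        · obtain ⟨hplb, hpvb⟩ := hM2b c s₀ e
          obtain ⟨hplb', hpvb'⟩ := hM2b c' s₀' e'
          have hpveq : (Ψ c s₀).1 = (Ψ c' s₀').1 := by rw [← hpvb, ← hpvb', heq]
          have hlt : s₀.length < n := by
            rw [← hlen]
            simp only [List.length_append, List.length_singleton]
            omega
          obtain ⟨hcc, hss⟩ := ih s₀.length hlt c s₀ c' s₀' rfl hpveq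
          subst hcc
          subst hss
          obtain ⟨hvα₀, hdv₀, hplv₀, hl0L₀, hvl0₀⟩ := hM1 c s₀
          obtain ⟨hmL, hmInj, hmSurj⟩ := hfL (Ψ c s₀).1 (Ψ c s₀).2 hl0L₀ hvl0₀
          have he1 : e.1 = e'.1 := by
            apply hmInj
            rw [← hplb, ← hplb', heq]
          have heqv : fV (fL (Ψ c s₀).1 (Ψ c s₀).2 e.1) (Ψ c s₀).1 e.2 =
              fV (fL (Ψ c s₀).1 (Ψ c s₀).2 e'.1) (Ψ c s₀).1 e'.2 := by
            show (step (Ψ c s₀) e).1 = (step (Ψ c s₀) e').1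
            rw [← hΨconcat c s₀ e, ← hΨconcat c s₀ e']
            exact heq
          rw [← he1] at heqv
          have he2 : e.2 = e'.2 :=
            (hfV (fL (Ψ c s₀).1 (Ψ c s₀).2 e.1) (Ψ c s₀).1 (hmL e.1).1
              (hmL e.1).2.1).2.1 heqv
          exact ⟨rfl, by rw [Prod.ext he1 he2]⟩
  -- surjectivity
  have hMsurj : ∀ n v, d v = n → (v = α ∨ ∃ c s, (Ψ c s).1 = v) := by
    intro n
    induction n using Nat.strong_induction_on with
    | _ n ih =>
      intro v hdvn
      by_cases hvα : v = α
      · exact Or.inl hvα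
      right
      obtain ⟨hplL, hvpl, hpvne, hpvd⟩ := hpl v hvα
      have hdlt : d (gate (pl v)) < n := by omega
      rcases ih (d (gate (pl v))) hdlt (gate (pl v)) rfl with hgα | ⟨c, s, hcs⟩
      · have hαmem : α ∈ pl v := by rw [← hgα]; exact hgate_mem _ hplL
        obtain ⟨i, hi⟩ := hfR_surj (pl v) hplL hαmem
        obtain ⟨hmem, hinjV, hsurjV⟩ := hfV (pl v) α hplL hαmem
        obtain ⟨a, ha⟩ := hsurjV v hvpl hvα
        refine ⟨(i, a), [], ?_⟩
        show fV (fR i) α a = v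
        rw [hi]
        exact ha
      · obtain ⟨hvα₀, hdv₀, hplv₀, hl0L₀, hvl0₀⟩ := hM1 c s
        have humem : (Ψ c s).1 ∈ pl v := by rw [hcs]; exact hgate_mem _ hplL
        have hne : pl v ≠ (Ψ c s).2 := by
          intro hh
          have hplu := hpl (Ψ c s).1 hvα₀
          have hvmem : v ∈ pl ((Ψ c s).1) := by rw [← hplv₀, ← hh]; exact hvpl
          have hddv : d (gate (pl v)) + 1 = d v := hpvd
          have hdcs : d (Ψ c s).1 + 1 = d v := by rw [hcs]; omega
          by_cases hvg : v = gate (pl ((Ψ c s).1))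
          · have h3 := hplu.2.2.2
            rw [← hvg] at h3
            omega
          · have h3 := hgate_d (pl ((Ψ c s).1)) hplu.1 v hvmem hvg
            have h4 := hplu.2.2.2
            omega
        obtain ⟨hmL, hmInj, hmSurj⟩ := hfL (Ψ c s).1 (Ψ c s).2 hl0L₀ hvl0₀
        obtain ⟨i, hi⟩ := hmSurj (pl v) hplL humem hne
        obtain ⟨hmem, hinjV, hsurjV⟩ := hfV (pl v) ((Ψ c s).1) hplL humem
        obtain ⟨a, ha⟩ := hsurjV v hvpl (by rw [hcs]; exact fun hh => hpvne hh.symm)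
        refine ⟨c, s ++ [(i, a)], ?_⟩
        rw [hΨconcat]
        show fV (fL (Ψ c s).1 (Ψ c s).2 i) (Ψ c s).1 a = v
        rw [hi]
        exact ha
  -- the address map as a function on WT
  set Φ : WT m t → V := fun z => match z with
    | none => α
    | some (c, s) => (Ψ c s).1 with hΦ
  have hΦnone : Φ none = α := rfl
  have hΦsome : ∀ c s, Φ (some (c, s)) = (Ψ c s).1 := fun c s => rfl
  have hΦinj : Function.Injective Φ := by
    intro z z' heq
    rcases z with _ | ⟨c, s⟩ <;> rcases z' with _ | ⟨c', s'⟩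
    · rfl
    · exact absurd (show α = (Ψ c' s').1 from heq).symm (hM1 c' s').1
    · exact absurd (show (Ψ c s).1 = α from heq) (hM1 c s).1
    · obtain ⟨hcc, hss⟩ := hMinj s.length c s c' s' rfl heq
      rw [hcc, hss]
  have hΦdist : ∀ z, d (Φ z) = depthW z := by
    intro z
    rcases z with _ | ⟨c, s⟩
    · show d α = depthW none
      simpa using hd0
    · show d (Ψ c s).1 = depthW (some (c, s))
      simpa using (hM1 c s).2.1
  have hΦsurj : Function.Surjective Φ := by
    intro v
    rcases hMsurj (d v) v rfl with rfl | ⟨c, s, hcs⟩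
    · exact ⟨none, rfl⟩
    · exact ⟨some (c, s), hcs⟩
  -- adjacency: backward direction
  have hParAdj : ∀ z z', parW z' = some z → Γ.Adj (Φ z) (Φ z') := by
    intro z z' hpar'
    rcases z' with _ | ⟨c, s⟩
    · simp at hpar'
    rcases eq_nil_or_concat' s with rfl | ⟨s₀, e, rfl⟩
    · rw [parW_some_nil, Option.some_inj] at hpar'
      subst hpar'
      obtain ⟨hlL, hαl⟩ := hfR_mem c.1
      obtain ⟨hmem, -, -⟩ := hfV (fR c.1) α hlL hαl
      obtain ⟨hvl, hvα⟩ := hmem c.2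
      exact hlobeclique (fR c.1) hlL α hαl _ hvl (Ne.symm hvα)
    · rw [parW_some_concat, Option.some_inj] at hpar'
      subst hpar'
      obtain ⟨hvα₀, hdv₀, hplv₀, hl0L₀, hvl0₀⟩ := hM1 c s₀
      obtain ⟨hmL, -, -⟩ := hfL (Ψ c s₀).1 (Ψ c s₀).2 hl0L₀ hvl0₀
      obtain ⟨hl'L, hvl', -⟩ := hmL e.1
      obtain ⟨hmem, -, -⟩ := hfV (fL (Ψ c s₀).1 (Ψ c s₀).2 e.1) (Ψ c s₀).1 hl'L hvl'
      obtain ⟨hwl', hwv⟩ := hmem e.2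
      have h2 : Φ (some (c, s₀ ++ [e])) = fV (fL (Ψ c s₀).1 (Ψ c s₀).2 e.1) (Ψ c s₀).1 e.2 := by
        rw [hΦsome, hΨconcat]
      rw [h2, hΦsome]
      exact hlobeclique _ hl'L _ hvl' _ hwl' (Ne.symm hwv)
  have hAdjOfRW : ∀ z z', RW z z' → Γ.Adj (Φ z) (Φ z') := by
    rintro z z' ⟨hne, hcase⟩
    rcases hcase with hp | hp | ⟨hzn, hpeq, hleq⟩
    · exact (hParAdj z' z hp).symm
    · exact hParAdj z z' hp
    · -- siblings
      rcases z with _ | ⟨c, s⟩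
      · exact absurd rfl hzn
      rcases z' with _ | ⟨c', s'⟩
      · rcases eq_nil_or_concat' s with rfl | ⟨s₀, e, rfl⟩ <;>
          simp [parW_some_concat] at hpeq
      rcases eq_nil_or_concat' s with rfl | ⟨s₀, e, rfl⟩
      · rcases eq_nil_or_concat' s' with rfl | ⟨s₀', e', rfl⟩
        · rw [lobeW_some_nil, lobeW_some_nil, Option.some_inj, Sum.inl.injEq] at hleq
          have hc2 : c.2 ≠ c'.2 := by
            intro h
            exact hne (by rw [Prod.ext hleq h])
          obtain ⟨hlL, hαl⟩ := hfR_mem c.1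
          obtain ⟨hmem, hinjV, -⟩ := hfV (fR c.1) α hlL hαl
          obtain ⟨hvl, -⟩ := hmem c.2
          obtain ⟨hvl', -⟩ := hmem c'.2
          have hneq : fV (fR c.1) α c.2 ≠ fV (fR c.1) α c'.2 := fun h => hc2 (hinjV h)
          have h2 : Φ (some (c', [])) = fV (fR c.1) α c'.2 := by
            rw [hΦsome, hΨnil, hleq]
          rw [hΦsome, h2]
          exact hlobeclique _ hlL _ hvl _ hvl' hneq
        · rw [parW_some_nil, parW_some_concat] at hpeq
          simp at hpeq
      · rcases eq_nil_or_concat' s' with rfl | ⟨s₀', e', rfl⟩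
        · rw [parW_some_concat, parW_some_nil] at hpeq
          simp at hpeq
        · rw [parW_some_concat, parW_some_concat, Option.some_inj, Option.some_inj] at hpeq
          obtain ⟨rfl, rfl⟩ := Prod.mk.inj hpeq
          rw [lobeW_some_concat, lobeW_some_concat, Option.some_inj, Sum.inr.injEq] at hleq
          have he2 : e.2 ≠ e'.2 := by
            intro h
            exact hne (by rw [Prod.ext hleq h])
          obtain ⟨hvα₀, hdv₀, hplv₀, hl0L₀, hvl0₀⟩ := hM1 c s₀
          obtain ⟨hmL, -, -⟩ := hfL (Ψ c s₀).1 (Ψ c s₀).2 hl0L₀ hvl0₀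
          obtain ⟨hl'L, hvl', -⟩ := hmL e.1
          obtain ⟨hmem, hinjV, -⟩ := hfV (fL (Ψ c s₀).1 (Ψ c s₀).2 e.1) (Ψ c s₀).1 hl'L hvl'
          obtain ⟨hwl, -⟩ := hmem e.2
          obtain ⟨hwl', -⟩ := hmem e'.2
          have hneq : fV (fL (Ψ c s₀).1 (Ψ c s₀).2 e.1) (Ψ c s₀).1 e.2 ≠
              fV (fL (Ψ c s₀).1 (Ψ c s₀).2 e.1) (Ψ c s₀).1 e'.2 := fun h => he2 (hinjV h)
          have h1 : Φ (some (c, s₀ ++ [e])) =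
              fV (fL (Ψ c s₀).1 (Ψ c s₀).2 e.1) (Ψ c s₀).1 e.2 := by
            rw [hΦsome, hΨconcat]
          have h2 : Φ (some (c, s₀ ++ [e'])) =
              fV (fL (Ψ c s₀).1 (Ψ c s₀).2 e.1) (Ψ c s₀).1 e'.2 := by
            rw [hΦsome, hΨconcat]
            show fV (fL (Ψ c s₀).1 (Ψ c s₀).2 e'.1) (Ψ c s₀).1 e'.2 = _
            rw [hleq]
          rw [h1, h2]
          exact hlobeclique _ hl'L _ hwl _ hwl' hneq
  -- adjacency: forward direction
  have hChild : ∀ z z', Γ.Adj (Φ z) (Φ z') → d (Φ z') = d (Φ z) + 1 → parW z' = some z := by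
    intro z z' hadj hdd
    rcases z' with _ | ⟨c, s⟩
    · rw [hΦnone, hd0] at hdd
      omega
    have hwα : (Ψ c s).1 ≠ α := (hM1 c s).1
    rw [hΦsome] at hadj hdd
    obtain ⟨l'', ⟨hl''L, hvl'', hwl''⟩, -⟩ := hedge (Φ z) (Ψ c s).1 hadj
    have hpleq : l'' = pl (Ψ c s).1 :=
      hU1 (Ψ c s).1 hwα l'' hl''L hwl'' (Φ z) hvl'' (by omega)
    have hvpv : Φ z = pv (Ψ c s).1 := by
      apply hU2 (Ψ c s).1 hwα (Φ z) (by rw [← hpleq]; exact hvl'') (by omega)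
    rcases eq_nil_or_concat' s with rfl | ⟨s₀, e, rfl⟩
    · obtain ⟨-, hpva⟩ := hM2a c
      have : Φ z = α := by rw [hvpv, hpva]
      have hz : z = none := hΦinj (by rw [this, hΦnone])
      rw [hz, parW_some_nil]
    · obtain ⟨-, hpvb⟩ := hM2b c s₀ e
      have : Φ z = Φ (some (c, s₀)) := by rw [hvpv, hpvb, hΦsome]
      have hz : z = some (c, s₀) := hΦinj this
      rw [hz, parW_some_concat]
  have hRWofAdj : ∀ z z', Γ.Adj (Φ z) (Φ z') → RW z z' := by
    intro z z' hadj
    have hΦne : Φ z ≠ Φ z' := hadj.ne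
    have hne : z ≠ z' := fun h => hΦne (congrArg Φ h)
    have hub1 : d (Φ z') ≤ d (Φ z) + 1 := hdadj _ _ hadj
    have hub2 : d (Φ z) ≤ d (Φ z') + 1 := hdadj _ _ hadj.symm
    by_cases h1 : d (Φ z') = d (Φ z) + 1
    · exact ⟨hne, Or.inr (Or.inl (hChild z z' hadj h1))⟩
    by_cases h2 : d (Φ z) = d (Φ z') + 1
    · exact ⟨hne, Or.inl (hChild z' z hadj.symm h2)⟩
    have heqd : d (Φ z) = d (Φ z') := by omega
    have hk : d (Φ z) ≠ 0 := by
      intro h0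
      have ha1 : Φ z = α := hdzero _ h0
      have ha2 : Φ z' = α := hdzero _ (by omega)
      exact hΦne (by rw [ha1, ha2])
    rcases z with _ | ⟨c, s⟩
    · exact absurd (by rw [hΦnone, hd0]) hk
    rcases z' with _ | ⟨c', s'⟩
    · rw [hΦnone, hd0] at heqd
      exact absurd heqd hk
    have hvα : (Ψ c s).1 ≠ α := (hM1 c s).1
    have hwα : (Ψ c' s').1 ≠ α := (hM1 c' s').1
    simp only [hΦsome] at hadj heqd hΦne hub1 hub2
    obtain ⟨l'', ⟨hl''L, hvl'', hwl''⟩, -⟩ := hedge (Ψ c s).1 (Ψ c' s').1 hadj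
    have hplv : l'' = pl (Ψ c s).1 := by
      by_contra hcon
      have := hP3 (Ψ c s).1 hvα l'' hl''L hvl'' hcon (Ψ c' s').1 hwl'' (Ne.symm hΦne)
      omega
    have hplw : l'' = pl (Ψ c' s').1 := by
      by_contra hcon
      have := hP3 (Ψ c' s').1 hwα l'' hl''L hwl'' hcon (Ψ c s).1 hvl'' hΦne
      omega
    have hpleq : pl (Ψ c s).1 = pl (Ψ c' s').1 := by rw [← hplv, ← hplw]
    have hpveq : pv (Ψ c s).1 = pv (Ψ c' s').1 := by
      simp only [hpv]
      rw [hpleq]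
    rcases eq_nil_or_concat' s with rfl | ⟨s₀, e, rfl⟩
    · rcases eq_nil_or_concat' s' with rfl | ⟨s₀', e', rfl⟩
      · obtain ⟨hpl1, -⟩ := hM2a c
        obtain ⟨hpl1', -⟩ := hM2a c'
        have hc1 : c.1 = c'.1 := hfR_inj (by rw [← hpl1, ← hpl1', hpleq])
        exact ⟨hne, Or.inr (Or.inr ⟨by simp, by rw [parW_some_nil, parW_some_nil],
          by rw [lobeW_some_nil, lobeW_some_nil, hc1]⟩)⟩
      · obtain ⟨-, hpva⟩ := hM2a c
        obtain ⟨-, hpvb'⟩ := hM2b c' s₀' e'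
        exfalso
        exact (hM1 c' s₀').1 (by rw [← hpvb', ← hpveq, hpva])
    · rcases eq_nil_or_concat' s' with rfl | ⟨s₀', e', rfl⟩
      · obtain ⟨-, hpvb⟩ := hM2b c s₀ e
        obtain ⟨-, hpva'⟩ := hM2a c'
        exfalso
        exact (hM1 c s₀).1 (by rw [← hpvb, hpveq, hpva'])
      · obtain ⟨hplb, hpvb⟩ := hM2b c s₀ e
        obtain ⟨hplb', hpvb'⟩ := hM2b c' s₀' e'
        have hpv0 : (Ψ c s₀).1 = (Ψ c' s₀').1 := by rw [← hpvb, ← hpvb', hpveq]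
        obtain ⟨hcc, hss⟩ := hMinj s₀.length c s₀ c' s₀' rfl hpv0
        subst hcc
        subst hss
        obtain ⟨hvα₀, hdv₀, hplv₀, hl0L₀, hvl0₀⟩ := hM1 c s₀
        obtain ⟨-, hmInj, -⟩ := hfL (Ψ c s₀).1 (Ψ c s₀).2 hl0L₀ hvl0₀
        have he1 : e.1 = e'.1 := hmInj (by rw [← hplb, ← hplb', hpleq])
        exact ⟨hne, Or.inr (Or.inr ⟨by simp, by rw [parW_some_concat, parW_some_concat],
          by rw [lobeW_some_concat, lobeW_some_concat, he1]⟩)⟩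
  exact ⟨Φ, hΦinj, hΦsurj, hΦnone, hΦdist, fun z z' => ⟨hRWofAdj z z', hAdjOfRW z z'⟩⟩

end MainStructure
theorem stmt15 {V : Type*} (Γ : SimpleGraph V) (hconn : Γ.Connected)
    (m t : ℕ) (hm : 2 ≤ m) (ht : 2 ≤ t)
    -- L is the set of lobes of Γ; each lobe is a complete graph on t+1 vertices
    (L : Set (Set V))
    (hlobesize : ∀ l ∈ L, l.ncard = t + 1)
    (hlobeclique : ∀ l ∈ L, ∀ x ∈ l, ∀ y ∈ l, x ≠ y → Γ.Adj x y)
    -- each edge lies in exactly one lobe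
    (hedge : ∀ x y : V, Γ.Adj x y → ∃! l, l ∈ L ∧ x ∈ l ∧ y ∈ l)
    -- each vertex lies in exactly m lobes
    (hvertex : ∀ v : V, {l ∈ L | v ∈ l}.ncard = m)
    -- connectivity one: every cycle is contained in a single lobe
    (hcycle : ∀ (v : V) (c : Γ.Walk v v), c.IsCycle →
      ∃ l ∈ L, ∀ x ∈ c.support, x ∈ l)
    (α : V) :
    -- each sphere is a single orbit of the stabiliser of α in Aut(Γ) ...
    (∀ r : ℕ, 1 ≤ r → ∀ β γ : V, Γ.dist α β = r → Γ.dist α γ = r →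
        ∃ φ : Γ ≃g Γ, φ α = α ∧ φ β = γ) ∧
    -- ... of size m·(m−1)^{r−1}·t^r ...
    (∀ r : ℕ, 1 ≤ r →
        {β : V | Γ.dist α β = r}.ncard = m * (m - 1) ^ (r - 1) * t ^ r) ∧
    -- ... and hence the non-decreasing sequence of subdegrees m_r (the sphere sizes)
    -- satisfies lim m_r^{1/r} = (m−1)·t = ((m−1)/m)·m₁
    Tendsto (fun r : ℕ => (({β : V | Γ.dist α β = r}.ncard : ℝ)) ^ ((r : ℝ)⁻¹))
      atTop (nhds (((m : ℝ) - 1) * t)) ∧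
    (((m : ℝ) - 1) * t = (((m : ℝ) - 1) / m) * ({β : V | Γ.dist α β = 1}.ncard : ℝ)) := by
  obtain ⟨Φ, hinj, hsurj, hroot, hdist, hadj⟩ :=
    mainStructure Γ hconn m t hm ht L hlobesize hlobeclique hedge hvertex hcycle α
  have hbij : Function.Bijective Φ := ⟨hinj, hsurj⟩
  set ΦE : WT m t ≃ V := Equiv.ofBijective Φ hbij with hΦE
  have hsphere : ∀ r : ℕ, {β : V | Γ.dist α β = r} = Φ '' {z : WT m t | depthW z = r} := by
    intro r
    ext β
    simp only [Set.mem_setOf_eq, Set.mem_image]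
    constructor
    · intro hβ
      obtain ⟨z, rfl⟩ := hsurj β
      exact ⟨z, by rw [← hdist z, hβ], rfl⟩
    · rintro ⟨z, hz, rfl⟩
      rw [hdist z, hz]
  have hcount : ∀ r : ℕ, 1 ≤ r →
      {β : V | Γ.dist α β = r}.ncard = m * (m - 1) ^ (r - 1) * t ^ r := by
    intro r hr
    obtain ⟨k, rfl⟩ : ∃ k, r = k + 1 := ⟨r - 1, by omega⟩
    rw [hsphere, Set.ncard_image_of_injective _ hinj, WT_sphere_ncard]
    simp
  refine ⟨?_, hcount, tendsto_aux m t hm ht _ hcount, ?_⟩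
  · intro r hr β γ hβ hγ
    have hΦx : Φ (ΦE.symm β) = β := ΦE.apply_symm_apply β
    have hΦy : Φ (ΦE.symm γ) = γ := ΦE.apply_symm_apply γ
    have hdx : depthW (ΦE.symm β) = r := by rw [← hdist _, hΦx, hβ]
    have hdy : depthW (ΦE.symm γ) = r := by rw [← hdist _, hΦy, hγ]
    obtain ⟨cx, sx, hxeq⟩ : ∃ cx sx, ΦE.symm β = some (cx, sx) := by
      rcases hxx : ΦE.symm β with _ | ⟨cx, sx⟩
      · rw [hxx] at hdx
        simp [depthW] at hdx
        omega
      · exact ⟨cx, sx, rfl⟩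
    obtain ⟨cy, sy, hyeq⟩ : ∃ cy sy, ΦE.symm γ = some (cy, sy) := by
      rcases hyy : ΦE.symm γ with _ | ⟨cy, sy⟩
      · rw [hyy] at hdy
        simp [depthW] at hdy
        omega
      · exact ⟨cy, sy, rfl⟩
    have hlen : sx.length = sy.length := by
      rw [hxeq] at hdx
      rw [hyeq] at hdy
      simp only [depthW_some] at hdx hdy
      omega
    have hFinvol := FW_invol (some (cx, sx) : WT m t) (some (cy, sy))
    set FE : WT m t ≃ WT m t :=
      ⟨FW (some (cx, sx)) (some (cy, sy)), FW (some (cx, sx)) (some (cy, sy)),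
        hFinvol, hFinvol⟩ with hFE
    refine ⟨⟨ΦE.symm.trans (FE.trans ΦE), ?_⟩, ?_, ?_⟩
    · intro a b
      show Γ.Adj (Φ (FW (some (cx, sx)) (some (cy, sy)) (ΦE.symm a)))
          (Φ (FW (some (cx, sx)) (some (cy, sy)) (ΦE.symm b))) ↔ Γ.Adj a b
      rw [hadj, RW_FW, ← hadj,
        show Φ (ΦE.symm a) = a from ΦE.apply_symm_apply a,
        show Φ (ΦE.symm b) = b from ΦE.apply_symm_apply b]
    · show Φ (FW (some (cx, sx)) (some (cy, sy)) (ΦE.symm α)) = α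
      have h0 : ΦE.symm α = none := by
        rw [Equiv.symm_apply_eq]
        exact (show ΦE none = α from hroot).symm
      rw [h0, FW_none, hroot]
    · show Φ (FW (some (cx, sx)) (some (cy, sy)) (ΦE.symm β)) = γ
      rw [hxeq, FW_self hlen, ← hyeq, hΦy]
  · rw [hcount 1 le_rfl]
    have hm0 : (m : ℝ) ≠ 0 := Nat.cast_ne_zero.2 (by omega)
    simp only [Nat.sub_self, pow_zero, mul_one, pow_one]
    push_cast
    field_simp
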